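/- arXiv:2209.11816 — 2 statements merged into one kernel-verified Lean document; each statement's English description precedes it below -/
import Mathlib

section
/- Let K be a number field with ring of integers O_K, let a be a nonzero fractional ideal of K, let q ⊆ O_K be a nonzero proper ideal, and let α ∈ a be a nonzero element. Then the residue class of α in a/qa generates a/qa as an O_K-module if and only if v_𝔭(α) = v_𝔭(a) for every prime ideal 𝔭 dividing q, where v_𝔭 denotes the 𝔭-adic valuation. -/
open NumberField FractionalIdeal IsDedekindDomain
open scoped nonZeroDivisors

lemma ideal_smul_eq_coe_mul {R K : Type*} [CommRing R] [CommRing K] [Algebra R K]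
    (q : Ideal R) (M : Submodule R K) :
    q • M = Submodule.map (Algebra.linearMap R K) q * M := by
  apply le_antisymm
  · rw [Submodule.smul_le]
    intro r hr m hm
    rw [Algebra.smul_def]
    exact Submodule.mul_mem_mul (Submodule.mem_map_of_mem hr) hm
  · rw [Submodule.mul_le]
    rintro x ⟨r, hr, rfl⟩ y hy
    rw [Algebra.linearMap_apply, ← Algebra.smul_def]
    exact Submodule.smul_mem_smul hr hy

/-- **Valuative criterion for generators of `a/qa`.**
Let `a` be a nonzero fractional ideal of a number field `K`, `q` a nonzero proper ideal of
`𝓞 K`, and `α ∈ a` nonzero. Then the class of `α` generates `a/qa` as an `𝓞 K`-module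
iff `v_𝔭(α) = v_𝔭(a)` for every prime `𝔭` dividing `q`. -/
theorem generates_iff_valuation_eq
    (K : Type*) [Field K] [NumberField K]
    (a : FractionalIdeal (𝓞 K)⁰ K) (ha : a ≠ 0)
    (q : Ideal (𝓞 K)) (hq₀ : q ≠ ⊥) (hq₁ : q ≠ ⊤)
    (α : K) (hα : α ∈ (a : Submodule (𝓞 K) K)) (hα₀ : α ≠ 0) :
    Submodule.span (𝓞 K)
        {(Submodule.Quotient.mk (⟨α, hα⟩ : (a : Submodule (𝓞 K) K)) :
          (a : Submodule (𝓞 K) K) ⧸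
            Submodule.comap (a : Submodule (𝓞 K) K).subtype
              (q • (a : Submodule (𝓞 K) K)))} = ⊤
      ↔ ∀ v : HeightOneSpectrum (𝓞 K), v.asIdeal ∣ q →
          FractionalIdeal.count K v (spanSingleton (𝓞 K)⁰ α) = FractionalIdeal.count K v a := by
  classical
  set R := 𝓞 K
  set M : Submodule R K := (a : Submodule R K) with hM
  set N : Submodule R M := Submodule.comap M.subtype (q • M) with hN
  set x : M := ⟨α, hα⟩ with hx
  -- Step 1: reduce to a submodule equation in `M`
  have step1 : Submodule.span R {(Submodule.Quotient.mk x : M ⧸ N)} = ⊤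
      ↔ N ⊔ Submodule.span R {x} = ⊤ := by
    have : ({(Submodule.Quotient.mk x : M ⧸ N)} : Set (M ⧸ N)) = N.mkQ '' {x} := by
      simp [Submodule.mkQ_apply]
    rw [this, ← Submodule.map_span, Submodule.map_mkQ_eq_top]
  -- Step 2: push forward to submodules of `K`
  have step2 : N ⊔ Submodule.span R {x} = ⊤ ↔ q • M ⊔ Submodule.span R {α} = M := by
    have hinj := Submodule.map_injective_of_injective (Submodule.injective_subtype M)
    constructor
    · intro h
      have := congrArg (Submodule.map M.subtype) h
      rwa [Submodule.map_sup, Submodule.map_comap_subtype,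
        inf_eq_right.mpr (Submodule.smul_le_right), Submodule.map_span, Submodule.map_top,
        Submodule.range_subtype, Set.image_singleton] at this
    · intro h
      apply hinj
      rwa [Submodule.map_sup, Submodule.map_comap_subtype,
        inf_eq_right.mpr (Submodule.smul_le_right), Submodule.map_span, Submodule.map_top,
        Submodule.range_subtype, Set.image_singleton]
  -- Step 3: to fractional ideals
  set b : FractionalIdeal R⁰ K := spanSingleton R⁰ α with hb
  have hb0 : b ≠ 0 := spanSingleton_ne_zero_iff.mpr hα₀
  have step3 : q • M ⊔ Submodule.span R {α} = M ↔ (↑q * a + b : FractionalIdeal R⁰ K) = a := by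
    rw [← coeToSubmodule_inj, coe_add, coe_mul, coe_coeIdeal, hb, coe_spanSingleton,
      Submodule.add_eq_sup, ideal_smul_eq_coe_mul]
    rfl
  -- Step 4: multiply by `a⁻¹`
  have hainv : a * a⁻¹ = 1 := mul_inv_cancel₀ ha
  have hainv0 : a⁻¹ ≠ 0 := inv_ne_zero ha
  set c : FractionalIdeal R⁰ K := b * a⁻¹ with hc
  have hc0 : c ≠ 0 := mul_ne_zero hb0 hainv0
  have hc1 : c ≤ 1 := by
    rw [hc, ← hainv]
    gcongr
    exact spanSingleton_le_iff_mem.mpr hα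
  obtain ⟨c₀, hc₀⟩ := le_one_iff_exists_coeIdeal.mp hc1
  have hc₀0 : c₀ ≠ 0 := by
    intro h
    apply hc0
    rw [← hc₀, h, Ideal.zero_eq_bot, coeIdeal_bot]
  have step4 : (↑q * a + b : FractionalIdeal R⁰ K) = a ↔ q ⊔ c₀ = ⊤ := by
    have key : (↑q * a + b : FractionalIdeal R⁰ K) = a ↔ (↑q + ↑c₀ : FractionalIdeal R⁰ K) = 1 := by
      rw [← (mul_left_injective₀ hainv0).eq_iff, add_mul, mul_assoc, hainv, mul_one,
        ← hc, ← hc₀]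
    rw [key, ← coeIdeal_sup, ← coeIdeal_top, coeIdeal_inj]
  -- Step 5: coprimality vs valuations
  have step5 : q ⊔ c₀ = ⊤ ↔ ∀ v : HeightOneSpectrum R, v.asIdeal ∣ q →
      FractionalIdeal.count K v b = FractionalIdeal.count K v a := by
    have count_c : ∀ v : HeightOneSpectrum R,
        FractionalIdeal.count K v c = FractionalIdeal.count K v b
          - FractionalIdeal.count K v a := by
      intro v
      rw [hc, FractionalIdeal.count_mul K v hb0 hainv0, FractionalIdeal.count_inv, sub_eq_add_neg]
    have hdvd_iff : ∀ v : HeightOneSpectrum R,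
        (¬ v.asIdeal ∣ c₀ ↔ FractionalIdeal.count K v c = 0) := by
      intro v
      rw [← hc₀, FractionalIdeal.count_coe K v hc₀0, Nat.cast_eq_zero,
        ← Associates.count_ne_zero_iff_dvd hc₀0 v.irreducible, not_not]
    constructor
    · intro h v hv
      have hnd : ¬ v.asIdeal ∣ c₀ := by
        intro hd
        have h1 : q ≤ v.asIdeal := Ideal.le_of_dvd hv
        have h2 : c₀ ≤ v.asIdeal := Ideal.le_of_dvd hd
        have : (⊤ : Ideal R) ≤ v.asIdeal := h ▸ sup_le h1 h2
        exact v.isPrime.ne_top (top_le_iff.mp this)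
      have := (hdvd_iff v).mp hnd
      rw [count_c v] at this
      linarith
    · intro h
      by_contra hne
      obtain ⟨m, hm, hle⟩ := Ideal.exists_le_maximal _ hne
      have hm_ne_bot : m ≠ ⊥ := by
        intro hbot
        exact hq₀ (le_bot_iff.mp (hbot ▸ le_trans le_sup_left hle))
      set v : HeightOneSpectrum R := ⟨m, hm.isPrime, hm_ne_bot⟩ with hv
      have hvq : v.asIdeal ∣ q := Ideal.dvd_iff_le.mpr (le_trans le_sup_left hle)
      have hvc : v.asIdeal ∣ c₀ := Ideal.dvd_iff_le.mpr (le_trans le_sup_right hle)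
      have := h v hvq
      have hzero : FractionalIdeal.count K v c = 0 := by
        rw [count_c v, this, sub_self]
      exact (hdvd_iff v).mpr hzero hvc
  rw [step1, step2, step3, step4, step5]
end

section
/- Let K be a number field of degree n and let a be a nonzero fractional ideal of K, viewed as a lattice in K⊗ℝ. There exists a constant C = C(K, a) such that for every X > 1, the number of points x ∈ a satisfying |x|_σ < X for every embedding σ and |x|_{σ_i} < 1 for at least one index i among the r₁ + r₂ archimedean places is at most C · X^{n−1}. -/
open NumberField NumberField.mixedEmbedding
open scoped nonZeroDivisors Classical

section AuxPhi

variable (K : Type*) [Field K] [NumberField K]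

/-- The real-part functional at an infinite place. -/
noncomputable def phiAt (w : InfinitePlace K) : mixedSpace K →ₗ[ℝ] ℝ :=
  if hw : w.IsReal then (LinearMap.proj ⟨w, hw⟩).comp (LinearMap.fst ℝ _ _)
  else Complex.reLm.comp ((LinearMap.proj
    ⟨w, NumberField.InfinitePlace.not_isReal_iff_isComplex.mp hw⟩).comp (LinearMap.snd ℝ _ _))

theorem abs_phiAt_le (w : InfinitePlace K) (x : mixedSpace K) :
    |phiAt K w x| ≤ normAtPlace w x := by
  by_cases hw : w.IsReal
  · rw [phiAt, dif_pos hw, normAtPlace_apply_of_isReal hw]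
    simp [Real.norm_eq_abs]
  · rw [phiAt, dif_neg hw,
      normAtPlace_apply_of_isComplex (NumberField.InfinitePlace.not_isReal_iff_isComplex.mp hw)]
    simpa using Complex.abs_re_le_norm _

theorem phiAt_one (w : InfinitePlace K) : phiAt K w (mixedEmbedding K 1) = 1 := by
  rw [map_one]
  by_cases hw : w.IsReal
  · rw [phiAt, dif_pos hw]; rfl
  · rw [phiAt, dif_neg hw]; simp [Prod.snd_one]

end AuxPhi

set_option maxHeartbeats 2000000 in
/-- **Lattice points close to the axes are rare.**
Let `K` be a number field of degree `n` and `a` a nonzero fractional ideal, viewed as a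
lattice in `K⊗ℝ`. There is `C = C(K,a)` such that for every `X > 1`, the number of points
`x ∈ a` with `|x|_σ < X` for every embedding and `|x|_{σᵢ} < 1` for at least one `i` is at
most `C · X^{n−1}`. -/
theorem lattice_points_near_axes (K : Type*) [Field K] [NumberField K]
    (a : FractionalIdeal (𝓞 K)⁰ K) (ha : a ≠ 0) :
    ∃ C : ℝ, ∀ X : ℝ, 1 < X →
      {x : K | x ∈ (a : Submodule (𝓞 K) K) ∧
          (∀ w : InfinitePlace K, normAtPlace w (mixedEmbedding K x) < X) ∧
          (∃ w : InfinitePlace K, normAtPlace w (mixedEmbedding K x) < 1)}.Finite ∧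
      (Nat.card {x : K | x ∈ (a : Submodule (𝓞 K) K) ∧
          (∀ w : InfinitePlace K, normAtPlace w (mixedEmbedding K x) < X) ∧
          (∃ w : InfinitePlace K, normAtPlace w (mixedEmbedding K x) < 1)} : ℝ)
        ≤ C * X ^ (Module.finrank ℚ K - 1) := by
  classical
  set n := Module.finrank ℚ K with hn
  set I : (FractionalIdeal (𝓞 K)⁰ K)ˣ := Units.mk0 a ha with hI
  set B := fractionalIdealLatticeBasis K I with hB
  -- membership in the lattice
  have hmem : ∀ x : K, x ∈ (a : Submodule (𝓞 K) K) →
      mixedEmbedding K x ∈ Submodule.span ℤ (Set.range B) := by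
    intro x hx
    rw [hB, mem_span_fractionalIdealLatticeBasis]
    exact ⟨x, by simpa [hI] using hx, rfl⟩
  have hint : ∀ x ∈ (a : Submodule (𝓞 K) K), ∀ i,
      ∃ m : ℤ, (m : ℝ) = B.repr (mixedEmbedding K x) i := by
    intro x hx i
    obtain ⟨m, hm⟩ := (B.mem_span_iff_repr_mem ℤ _).mp (hmem x hx) i
    exact ⟨m, by rw [← hm]; simp⟩
  have hcard : Fintype.card (Module.Free.ChooseBasisIndex ℤ I) = n := by
    rw [← Module.finrank_eq_card_basis B, mixedEmbedding.finrank]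
  have hn1 : 1 ≤ n := Module.finrank_pos
  haveI : Nonempty (Module.Free.ChooseBasisIndex ℤ I) := by
    rw [← Fintype.card_pos_iff, hcard]; omega
  -- coordinate functionals
  set ψ : Module.Free.ChooseBasisIndex ℤ I → (mixedSpace K →L[ℝ] ℝ) :=
    fun i => LinearMap.toContinuousLinearMap (B.coord i) with hψ
  set C₁ : ℝ := 1 + ∑ i, ‖ψ i‖ with hC₁def
  have hC₁ : 1 ≤ C₁ := by
    have : 0 ≤ ∑ i, ‖ψ i‖ := Finset.sum_nonneg fun i _ => norm_nonneg _
    simp [hC₁def]; linarith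
  have hψC₁ : ∀ i, ‖ψ i‖ ≤ C₁ := by
    intro i
    have := Finset.single_le_sum (f := fun i => ‖ψ i‖)
      (fun j _ => norm_nonneg _) (Finset.mem_univ i)
    simp only [hC₁def]; linarith
  -- a basis vector on which each φ_w does not vanish
  have hex : ∀ w : InfinitePlace K, ∃ i, phiAt K w (B i) ≠ 0 := by
    intro w
    by_contra hc
    push_neg at hc
    have h0 : phiAt K w = 0 := B.ext fun i => by simpa using hc i
    have h1 := phiAt_one K w
    rw [h0] at h1; simpa using h1
  choose iw hiw using hex
  set α : InfinitePlace K → ℝ := fun w => phiAt K w (B (iw w)) with hα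
  set M : InfinitePlace K → ℤ := fun w => ⌈2 / |α w|⌉ + 1 with hM
  have hαpos : ∀ w, 0 < |α w| := fun w => abs_pos.mpr (hiw w)
  have hM2 : ∀ w, (0:ℤ) ≤ M w := by
    intro w
    have : (0:ℝ) < 2 / |α w| := div_pos two_pos (hαpos w)
    have := Int.ceil_pos.mpr this
    simp only [hM]; omega
  have hMα : ∀ w, 2 / |α w| ≤ (M w : ℝ) - 1 := by
    intro w
    have := Int.le_ceil (2 / |α w|)
    simp only [hM]; push_cast; linarith
  refine ⟨(∑ w, (M w : ℝ)) * (2 * C₁ + 3) ^ (n - 1), fun X hX => ?_⟩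
  set S := {x : K | x ∈ (a : Submodule (𝓞 K) K) ∧
      (∀ w : InfinitePlace K, normAtPlace w (mixedEmbedding K x) < X) ∧
      (∃ w : InfinitePlace K, normAtPlace w (mixedEmbedding K x) < 1)} with hS
  set N : ℤ := ⌈C₁ * X⌉ with hN
  have hC₁X : 1 ≤ C₁ * X := le_trans hC₁ (by nlinarith)
  have hN1 : 1 ≤ N := by
    have : 0 < N := by rw [hN]; exact Int.ceil_pos.mpr (by linarith)
    omega
  -- integer coordinates map
  set F : K → (Module.Free.ChooseBasisIndex ℤ I → ℤ) :=
    fun x i => ⌊B.repr (mixedEmbedding K x) i⌋ with hFdef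
  have hF : ∀ x ∈ (a : Submodule (𝓞 K) K), ∀ i,
      ((F x i : ℝ)) = B.repr (mixedEmbedding K x) i := by
    intro x hx i
    obtain ⟨m, hm⟩ := hint x hx i
    simp [hFdef, ← hm, Int.floor_intCast]
  have hinj : Set.InjOn F S := by
    intro x hx y hy hxy
    refine mixedEmbedding_injective K (B.ext_elem fun i => ?_)
    rw [← hF x hx.1 i, ← hF y hy.1 i, hxy]
  have hbound : ∀ x ∈ S, ∀ i, |(F x i : ℝ)| ≤ C₁ * X := by
    intro x hx i
    rw [hF x hx.1 i]
    have hv : ‖mixedEmbedding K x‖ ≤ X := by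
      rw [norm_eq_sup'_normAtPlace]
      exact Finset.sup'_le _ _ fun w _ => (hx.2.1 w).le
    have h1 : |B.repr (mixedEmbedding K x) i| = ‖ψ i (mixedEmbedding K x)‖ := by
      simp [hψ, Real.norm_eq_abs]
    rw [h1]
    calc ‖ψ i (mixedEmbedding K x)‖ ≤ ‖ψ i‖ * ‖mixedEmbedding K x‖ := (ψ i).le_opNorm _
      _ ≤ C₁ * X := mul_le_mul (hψC₁ i) hv (norm_nonneg _) (by linarith)
  -- the target finsets
  set box : Finset (Module.Free.ChooseBasisIndex ℤ I → ℤ) :=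
    Fintype.piFinset fun _ => Finset.Icc (-N) N with hbox
  set Tw : InfinitePlace K → Finset (Module.Free.ChooseBasisIndex ℤ I → ℤ) := fun w =>
    box.filter fun d => |∑ i, (d i : ℝ) * phiAt K w (B i)| < 1 with hTwdef
  set T : Finset (Module.Free.ChooseBasisIndex ℤ I → ℤ) := Finset.univ.biUnion Tw with hT
  have hsum : ∀ x ∈ S, ∀ w, ∑ i, (F x i : ℝ) * phiAt K w (B i)
      = phiAt K w (mixedEmbedding K x) := by
    intro x hx w
    conv_rhs => rw [← B.sum_repr (mixedEmbedding K x)]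
    rw [map_sum]
    exact Finset.sum_congr rfl fun i _ => by rw [map_smul, smul_eq_mul, hF x hx.1 i]
  have hsub : F '' S ⊆ ↑T := by
    rintro - ⟨x, hx, rfl⟩
    obtain ⟨w, hw⟩ := hx.2.2
    refine Finset.mem_coe.mpr (Finset.mem_biUnion.mpr ⟨w, Finset.mem_univ w, ?_⟩)
    rw [hTwdef, Finset.mem_filter]
    constructor
    · rw [hbox, Fintype.mem_piFinset]
      intro i
      rw [Finset.mem_Icc]
      have h1 := hbound x hx i
      have h2 : C₁ * X ≤ (N : ℝ) := Int.le_ceil _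
      have := abs_le.mp (h1.trans h2)
      constructor
      · exact_mod_cast this.1
      · exact_mod_cast this.2
    · rw [hsum x hx w]
      exact lt_of_le_of_lt (abs_phiAt_le K w _) hw
  have hfin : S.Finite := Set.Finite.of_finite_image (T.finite_toSet.subset hsub) hinj
  refine ⟨hfin, ?_⟩
  have hcardS : Nat.card S ≤ T.card := by
    rw [Nat.card_coe_set_eq]
    calc S.ncard = (F '' S).ncard := (Set.ncard_image_of_injOn hinj).symm
      _ ≤ (↑T : Set _).ncard := Set.ncard_le_ncard hsub T.finite_toSet
      _ = T.card := Set.ncard_coe_finset T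
  -- count each `Tw w`
  have hTwcard : ∀ w, (Tw w).card ≤ (M w).toNat * (2 * N + 1).toNat ^ (n - 1) := by
    intro w
    set g := fun (d : Module.Free.ChooseBasisIndex ℤ (↑↑I : Submodule (𝓞 K) K) → ℤ)
      (j : {j // j ≠ iw w}) => d j.1 with hg
    have hfiber : ∀ r ∈ (Tw w).image g,
        ((Tw w).filter fun d => g d = r).card ≤ (M w).toNat := by
      intro r hr
      set fib := (Tw w).filter fun d => g d = r with hfib
      have hginj : Set.InjOn
          (fun d : Module.Free.ChooseBasisIndex ℤ (↑↑I : Submodule (𝓞 K) K) → ℤ => d (iw w))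
          (fib : Set _) := by
        intro d hd d' hd' h
        funext j
        by_cases hj : j = iw w
        · subst hj; exact h
        · have h1 := (Finset.mem_filter.mp hd).2
          have h2 := (Finset.mem_filter.mp hd').2
          exact (congrFun h1 ⟨j, hj⟩).trans (congrFun h2 ⟨j, hj⟩).symm
      rw [← Finset.card_image_of_injOn hginj]
      set s' := fib.image fun d => d (iw w) with hs'
      set t : ℝ := ∑ j ∈ Finset.univ.erase (iw w),
        ((if h : j = iw w then 0 else r ⟨j, h⟩ : ℤ) : ℝ) * phiAt K w (B j) with ht
      have hk : ∀ k ∈ s', |(k : ℝ) * α w + t| < 1 := by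
        intro k hks
        obtain ⟨d, hd, rfl⟩ := Finset.mem_image.mp hks
        obtain ⟨hdT, hdr⟩ := Finset.mem_filter.mp hd
        have hlt := (Finset.mem_filter.mp hdT).2
        have heq : ∑ i, (d i : ℝ) * phiAt K w (B i) = (d (iw w) : ℝ) * α w + t := by
          rw [← Finset.add_sum_erase _ _ (Finset.mem_univ (iw w))]
          congr 1
          refine Finset.sum_congr rfl fun j hj => ?_
          have hjne : j ≠ iw w := (Finset.mem_erase.mp hj).1
          have hdj : d j = r ⟨j, hjne⟩ := congrFun hdr ⟨j, hjne⟩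
          rw [hdj, dif_neg hjne]
        rwa [heq] at hlt
      rcases s'.eq_empty_or_nonempty with h | h
      · simp [h]
      · have hsubI : s' ⊆ Finset.Icc (s'.min' h) (s'.min' h + (M w - 1)) := by
          intro k hks
          refine Finset.mem_Icc.mpr ⟨s'.min'_le k hks, ?_⟩
          have h1 := hk k hks
          have h2 := hk (s'.min' h) (s'.min'_mem h)
          have hle : s'.min' h ≤ k := s'.min'_le k hks
          have key : ((k - s'.min' h : ℤ) : ℝ) * |α w| < 2 := by
            have heq2 : ((k - s'.min' h : ℤ) : ℝ) * |α w|
                = |((k : ℝ) * α w + t) - (((s'.min' h : ℤ) : ℝ) * α w + t)| := by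
              rw [add_sub_add_right_eq_sub, ← sub_mul, abs_mul]
              congr 1
              rw [abs_of_nonneg]
              · push_cast; ring
              · have : ((s'.min' h : ℤ) : ℝ) ≤ ((k : ℤ) : ℝ) := by exact_mod_cast hle
                linarith
            rw [heq2, sub_eq_add_neg]
            have h3 := abs_add_le ((k : ℝ) * α w + t) (-(((s'.min' h : ℤ) : ℝ) * α w + t))
            rw [abs_neg] at h3
            linarith
          have hlt2 : ((k - s'.min' h : ℤ) : ℝ) < 2 / |α w| :=
            (lt_div_iff₀ (hαpos w)).mpr key
          have hlt3 : ((k - s'.min' h : ℤ) : ℝ) < (M w : ℝ) - 1 := hlt2.trans_le (hMα w)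
          have hlt4 : (k - s'.min' h : ℤ) < M w - 1 := by exact_mod_cast hlt3
          omega
        calc s'.card ≤ (Finset.Icc (s'.min' h) (s'.min' h + (M w - 1))).card :=
              Finset.card_le_card hsubI
          _ = (M w).toNat := by rw [Int.card_Icc]; omega
    have himg : ((Tw w).image g).card ≤ (2 * N + 1).toNat ^ (n - 1) := by
      have hsub2 : (Tw w).image g ⊆
          Fintype.piFinset fun _ : {j // j ≠ iw w} => Finset.Icc (-N) N := by
        intro r h
        obtain ⟨d, hd, rfl⟩ := Finset.mem_image.mp h
        have hdbox := (Finset.mem_filter.mp hd).1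
        rw [Fintype.mem_piFinset]
        exact fun j => Fintype.mem_piFinset.mp hdbox j
      have hcards : Fintype.card {j // j ≠ iw w} = n - 1 := by
        have := Fintype.card_subtype_compl (fun j : Module.Free.ChooseBasisIndex ℤ I => j = iw w)
        rw [Fintype.card_subtype_eq, hcard] at this
        exact this
      calc ((Tw w).image g).card
          ≤ (Fintype.piFinset fun _ : {j // j ≠ iw w} => Finset.Icc (-N) N).card :=
            Finset.card_le_card hsub2
        _ = (2 * N + 1).toNat ^ (n - 1) := by
            rw [Fintype.card_piFinset]
            rw [Finset.prod_const, Int.card_Icc, Finset.card_univ, hcards]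
            congr 1
            omega
    calc (Tw w).card ≤ (M w).toNat * ((Tw w).image g).card :=
          Finset.card_le_mul_card_image _ _ hfiber
      _ ≤ (M w).toNat * (2 * N + 1).toNat ^ (n - 1) := Nat.mul_le_mul_left _ himg
  have hTcard : T.card ≤ ∑ w, (M w).toNat * (2 * N + 1).toNat ^ (n - 1) :=
    (Finset.card_biUnion_le).trans (Finset.sum_le_sum fun w _ => hTwcard w)
  -- final arithmetic
  have hXpos : (0 : ℝ) < X := by linarith
  have hNreal : ((2 * N + 1).toNat : ℝ) ≤ (2 * C₁ + 3) * X := by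
    have h0 : (0 : ℤ) ≤ 2 * N + 1 := by omega
    have h1 : ((2 * N + 1).toNat : ℝ) = ((2 * N + 1 : ℤ) : ℝ) := by
      exact_mod_cast congrArg (Int.cast : ℤ → ℝ) (Int.toNat_of_nonneg h0)
    have hceil : (N : ℝ) < C₁ * X + 1 := by rw [hN]; exact Int.ceil_lt_add_one _
    rw [h1]; push_cast
    nlinarith
  have h1 : (Nat.card S : ℝ) ≤ ∑ w, ((M w).toNat : ℝ) * ((2 * N + 1).toNat : ℝ) ^ (n - 1) := by
    exact_mod_cast hcardS.trans hTcard
  have h2 : (Nat.card S : ℝ) ≤ (∑ w, (M w : ℝ)) * ((2 * C₁ + 3) ^ (n - 1) * X ^ (n - 1)) := by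
    calc (Nat.card S : ℝ) ≤ ∑ w, ((M w).toNat : ℝ) * ((2 * N + 1).toNat : ℝ) ^ (n - 1) := h1
      _ ≤ ∑ w, (M w : ℝ) * ((2 * C₁ + 3) ^ (n - 1) * X ^ (n - 1)) := by
          refine Finset.sum_le_sum fun w _ => ?_
          have hMcast : ((M w).toNat : ℝ) = (M w : ℝ) := by
            exact_mod_cast congrArg (Int.cast : ℤ → ℝ) (Int.toNat_of_nonneg (hM2 w))
          rw [hMcast, ← mul_pow]
          refine mul_le_mul_of_nonneg_left ?_ (by exact_mod_cast hM2 w)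
          exact pow_le_pow_left₀ (Nat.cast_nonneg _) hNreal (n - 1)
      _ = (∑ w, (M w : ℝ)) * ((2 * C₁ + 3) ^ (n - 1) * X ^ (n - 1)) := by
          rw [← Finset.sum_mul]
  calc (Nat.card S : ℝ)
      ≤ (∑ w, (M w : ℝ)) * ((2 * C₁ + 3) ^ (n - 1) * X ^ (n - 1)) := h2
    _ = (∑ w, (M w : ℝ)) * (2 * C₁ + 3) ^ (n - 1) * X ^ (n - 1) := by ring
end
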